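/- arXiv:1504.05885 — 6 statements merged into one kernel-verified Lean document; each statement's English description precedes it below -/
import Mathlib

section
/- Let μ ∈ ℝ, 0 < T_c ≤ T, κ > 0, V : ℝ³ → ℝ, and let α_* ∈ L²(ℝ³) with ‖α_*‖₂ = 1 be such that the quadratic form Q_{T_c}(φ) = ∫ K_{T_c}(k)|φ̂(k)|² d³k + ∫ V(x)|φ(x)|² d³x satisfies Q_{T_c}(α_*) = 0, the associated sesquilinear form satisfies B_{T_c}(α_*, φ) = 0 for all φ, and Q_{T_c}(φ) ≥ κ ‖φ − ⟨α_*, φ⟩ α_*‖₂² for all φ in the form domain. Let h > 0, C₀ > 0, and suppose α ∈ L²(ℝ³) and measurable γ : ℝ³ → ℝ satisfy ∫ K_T(k)|α̂(k)|² d³k + ∫ V(x)|α(x)|² d³x + ∫ K_T(k)(γ(k) − γ_n(k))² d³k ≤ C₀ h⁴. Then ξ = α − ⟨α_*, α⟩ α_* satisfies ‖ξ‖₂² ≤ C₀ h⁴ / κ, and ‖γ − γ_n‖₂² ≤ C₀ h⁴ / (2T). -/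
open MeasureTheory Complex
open scoped FourierTransform

noncomputable section

/-- The symbol `K_{T'}(k) = (|k|² - μ)/tanh((|k|² - μ)/(2T'))`, with value `2T'` on the
Fermi sphere `|k|² = μ`. -/
def Ksymb (μ T' : ℝ) (k : EuclideanSpace ℝ (Fin 3)) : ℝ :=
  if ‖k‖ ^ 2 = μ then 2 * T'
  else (‖k‖ ^ 2 - μ) / Real.tanh ((‖k‖ ^ 2 - μ) / (2 * T'))

/-- Normal-state momentum distribution at temperature `T` and chemical potential `μ`. -/
def gammaN (μ T : ℝ) (k : EuclideanSpace ℝ (Fin 3)) : ℝ :=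
  (1 + Real.exp ((‖k‖ ^ 2 - μ) / T))⁻¹

/-- The quadratic form `Q_{T'}(φ) = ∫ K_{T'}(k)|φ̂(k)|² dk + ∫ V(x)|φ(x)|² dx`. -/
def Qform (μ T' : ℝ) (V : EuclideanSpace ℝ (Fin 3) → ℝ)
    (φ : EuclideanSpace ℝ (Fin 3) → ℂ) : ℝ :=
  (∫ k, Ksymb μ T' k * ‖𝓕 φ k‖ ^ 2) + ∫ x, V x * ‖φ x‖ ^ 2

/-- The sesquilinear form associated with `Q_{T'}`. -/
def Bform (μ T' : ℝ) (V : EuclideanSpace ℝ (Fin 3) → ℝ)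
    (f φ : EuclideanSpace ℝ (Fin 3) → ℂ) : ℂ :=
  (∫ k, (Ksymb μ T' k : ℂ) * (starRingEnd ℂ) (𝓕 f k) * 𝓕 φ k) +
    ∫ x, (V x : ℂ) * (starRingEnd ℂ) (f x) * φ x

/-- The form domain of `K_{T'}(-i∇) + V`: square-integrable `φ` for which both pieces of
the quadratic form are finite. -/
def InFormDomain (μ T' : ℝ) (V : EuclideanSpace ℝ (Fin 3) → ℝ)
    (φ : EuclideanSpace ℝ (Fin 3) → ℂ) : Prop :=
  MemLp φ 2 volume ∧ Integrable (fun k => Ksymb μ T' k * ‖𝓕 φ k‖ ^ 2) ∧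
    Integrable (fun x => V x * ‖φ x‖ ^ 2)


lemma my_tanh_pos {t : ℝ} (ht : 0 < t) : 0 < Real.tanh t := by
  rw [Real.tanh_eq_sinh_div_cosh]
  exact div_pos (Real.sinh_pos_iff.mpr ht) (Real.cosh_pos t)

lemma my_tanh_mono : Monotone Real.tanh := by
  intro a b hab
  rw [Real.tanh_eq_sinh_div_cosh, Real.tanh_eq_sinh_div_cosh,
    div_le_div_iff₀ (Real.cosh_pos a) (Real.cosh_pos b)]
  have h1 : Real.sinh (a - b) ≤ 0 := Real.sinh_nonpos_iff.mpr (sub_nonpos.mpr hab)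
  have h2 := Real.sinh_sub a b
  linarith [h2 ▸ h1]

lemma my_sinh_le_mul_cosh {t : ℝ} (ht : 0 ≤ t) : Real.sinh t ≤ t * Real.cosh t := by
  set f : ℝ → ℝ := fun x => x * Real.cosh x - Real.sinh x with hf
  have hder : ∀ x : ℝ, HasDerivAt f (x * Real.sinh x) x := by
    intro x
    have h1 := (hasDerivAt_id x).mul (Real.hasDerivAt_cosh x)
    have h2 := Real.hasDerivAt_sinh x
    have := h1.sub h2
    exact this.congr_deriv (by simp only [id_eq]; ring)
  have mono : MonotoneOn f (Set.Ici 0) := by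
    apply monotoneOn_of_deriv_nonneg (convex_Ici 0)
    · exact ((continuous_id.mul Real.continuous_cosh).sub Real.continuous_sinh).continuousOn
    · intro x _
      exact (hder x).differentiableAt.differentiableWithinAt
    · intro x hx
      rw [interior_Ici] at hx
      rw [(hder x).deriv]
      exact mul_nonneg hx.le (Real.sinh_nonneg_iff.mpr hx.le)
  have := mono Set.self_mem_Ici ht ht
  simp only [hf, zero_mul, Real.sinh_zero, sub_zero, zero_sub, neg_nonpos] at this
  linarith [this]

lemma my_tanh_le_self {t : ℝ} (ht : 0 ≤ t) : Real.tanh t ≤ t := by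
  rw [Real.tanh_eq_sinh_div_cosh, div_le_iff₀ (Real.cosh_pos t)]
  exact my_sinh_le_mul_cosh ht

lemma aux_ge_pos {T' x : ℝ} (hT' : 0 < T') (hx : 0 < x) :
    2 * T' ≤ x / Real.tanh (x / (2 * T')) := by
  have ht0 : 0 < Real.tanh (x / (2 * T')) := my_tanh_pos (by positivity)
  rw [le_div_iff₀ ht0]
  have h := my_tanh_le_self (show (0:ℝ) ≤ x / (2 * T') by positivity)
  calc 2 * T' * Real.tanh (x / (2 * T')) ≤ 2 * T' * (x / (2 * T')) := by nlinarith
    _ = x := by field_simp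

lemma aux_ge {T' x : ℝ} (hT' : 0 < T') (hx : x ≠ 0) :
    2 * T' ≤ x / Real.tanh (x / (2 * T')) := by
  rcases hx.lt_or_gt with hl | hl
  · have key := aux_ge_pos hT' (neg_pos.mpr hl)
    rwa [show -x / (2 * T') = -(x / (2 * T')) by ring, Real.tanh_neg, neg_div_neg_eq] at key
  · exact aux_ge_pos hT' hl

lemma aux_mono_pos {Tc T x : ℝ} (hTc : 0 < Tc) (hTcT : Tc ≤ T) (hx : 0 < x) :
    x / Real.tanh (x / (2 * Tc)) ≤ x / Real.tanh (x / (2 * T)) := by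
  have hT : 0 < T := lt_of_lt_of_le hTc hTcT
  have h1 : x / (2 * T) ≤ x / (2 * Tc) :=
    div_le_div_of_nonneg_left hx.le (by positivity) (by linarith)
  have h2 : 0 < Real.tanh (x / (2 * T)) := my_tanh_pos (by positivity)
  have h3 : Real.tanh (x / (2 * T)) ≤ Real.tanh (x / (2 * Tc)) := my_tanh_mono h1
  exact div_le_div_of_nonneg_left hx.le h2 h3

lemma aux_mono {Tc T x : ℝ} (hTc : 0 < Tc) (hTcT : Tc ≤ T) (hx : x ≠ 0) :
    x / Real.tanh (x / (2 * Tc)) ≤ x / Real.tanh (x / (2 * T)) := by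
  rcases hx.lt_or_gt with hl | hl
  · have key := aux_mono_pos hTc hTcT (neg_pos.mpr hl)
    rwa [show -x / (2 * Tc) = -(x / (2 * Tc)) by ring, show -x / (2 * T) = -(x / (2 * T)) by ring,
      Real.tanh_neg, Real.tanh_neg, neg_div_neg_eq, neg_div_neg_eq] at key
  · exact aux_mono_pos hTc hTcT hl


lemma two_le_Ksymb {μ T' : ℝ} (hT' : 0 < T') (k : EuclideanSpace ℝ (Fin 3)) :
    2 * T' ≤ Ksymb μ T' k := by
  unfold Ksymb
  split_ifs with hk
  · exact le_rfl
  · exact aux_ge hT' (sub_ne_zero.mpr hk)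

lemma Ksymb_pos {μ T' : ℝ} (hT' : 0 < T') (k : EuclideanSpace ℝ (Fin 3)) :
    0 < Ksymb μ T' k := lt_of_lt_of_le (by positivity) (two_le_Ksymb hT' k)

lemma Ksymb_mono {μ Tc T : ℝ} (hTc : 0 < Tc) (hTcT : Tc ≤ T) (k : EuclideanSpace ℝ (Fin 3)) :
    Ksymb μ Tc k ≤ Ksymb μ T k := by
  unfold Ksymb
  split_ifs with hk
  · linarith
  · exact aux_mono hTc hTcT (sub_ne_zero.mpr hk)

lemma Ksymb_measurable (μ T' : ℝ) : Measurable (Ksymb μ T') := by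
  have h1 : Measurable fun k : EuclideanSpace ℝ (Fin 3) => ‖k‖ ^ 2 - μ :=
    (measurable_norm.pow_const 2).sub_const μ
  unfold Ksymb
  refine Measurable.ite ?_ measurable_const ?_
  · exact measurableSet_eq_fun (measurable_norm.pow_const 2) measurable_const
  · have htanh : Continuous Real.tanh := by
      have he : Real.tanh = fun x => Real.sinh x / Real.cosh x :=
        funext fun x => Real.tanh_eq_sinh_div_cosh x
      rw [he]
      exact Real.continuous_sinh.div Real.continuous_cosh fun x => (Real.cosh_pos x).ne'
    exact h1.div (htanh.measurable.comp (h1.div_const (2 * T')))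

/-- A priori bounds: if the energy expression is at most `C₀ h⁴`, then the part of `α`
orthogonal to `α_*` and the deviation `γ - γ_n` are small in `L²`. -/
theorem apriori_bounds_from_energy
    (μ Tc T κ h C₀ : ℝ) (hTc : 0 < Tc) (hTcT : Tc ≤ T) (hκ : 0 < κ)
    (hh : 0 < h) (hC₀ : 0 < C₀)
    (V : EuclideanSpace ℝ (Fin 3) → ℝ)
    (αstar : EuclideanSpace ℝ (Fin 3) → ℂ)
    (hαstarL2 : MemLp αstar 2 volume) (hαstarnorm : (∫ x, ‖αstar x‖ ^ 2) = 1)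
    (hQ0 : Qform μ Tc V αstar = 0)
    (hB : ∀ φ, InFormDomain μ Tc V φ → Bform μ Tc V αstar φ = 0)
    (hgap : ∀ φ, InFormDomain μ Tc V φ →
      κ * ∫ x, ‖φ x - (∫ y, (starRingEnd ℂ) (αstar y) * φ y) • αstar x‖ ^ 2 ≤
        Qform μ Tc V φ)
    (α : EuclideanSpace ℝ (Fin 3) → ℂ) (γ : EuclideanSpace ℝ (Fin 3) → ℝ)
    (hα : MemLp α 2 volume) (hγ : Measurable γ)
    (hint1 : Integrable (fun k => Ksymb μ T k * ‖𝓕 α k‖ ^ 2))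
    (hint2 : Integrable (fun x => V x * ‖α x‖ ^ 2))
    (hint3 : Integrable (fun k => Ksymb μ T k * (γ k - gammaN μ T k) ^ 2))
    (henergy : (∫ k, Ksymb μ T k * ‖𝓕 α k‖ ^ 2) + (∫ x, V x * ‖α x‖ ^ 2) +
        (∫ k, Ksymb μ T k * (γ k - gammaN μ T k) ^ 2) ≤ C₀ * h ^ 4) :
    (∫ x, ‖α x - (∫ y, (starRingEnd ℂ) (αstar y) * α y) • αstar x‖ ^ 2) ≤ C₀ * h ^ 4 / κ ∧
      (∫ k, (γ k - gammaN μ T k) ^ 2) ≤ C₀ * h ^ 4 / (2 * T) := by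
  have hT : 0 < T := lt_of_lt_of_le hTc hTcT
  -- measurability and integrability of the `Tc`-kinetic term
  have hratio : Measurable fun k => Ksymb μ Tc k / Ksymb μ T k :=
    (Ksymb_measurable μ Tc).div (Ksymb_measurable μ T)
  have hf_eq : (fun k => Ksymb μ Tc k * ‖𝓕 α k‖ ^ 2)
      = fun k => (Ksymb μ Tc k / Ksymb μ T k) * (Ksymb μ T k * ‖𝓕 α k‖ ^ 2) := by
    funext k
    have hne : Ksymb μ T k ≠ 0 := (Ksymb_pos hT k).ne'
    field_simp
  have hf_meas : AEStronglyMeasurable (fun k => Ksymb μ Tc k * ‖𝓕 α k‖ ^ 2) volume := by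
    rw [hf_eq]
    exact hratio.aestronglyMeasurable.mul hint1.aestronglyMeasurable
  have hintTc : Integrable (fun k => Ksymb μ Tc k * ‖𝓕 α k‖ ^ 2) := by
    refine hint1.mono' hf_meas ?_
    filter_upwards with k
    have h0 : 0 ≤ Ksymb μ Tc k := (Ksymb_pos hTc k).le
    rw [Real.norm_of_nonneg (by positivity)]
    exact mul_le_mul_of_nonneg_right (Ksymb_mono hTc hTcT k) (by positivity)
  have hdom : InFormDomain μ Tc V α := ⟨hα, hintTc, hint2⟩
  have hQgap := hgap α hdom
  -- comparison of kinetic terms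
  have hKcomp : (∫ k, Ksymb μ Tc k * ‖𝓕 α k‖ ^ 2) ≤ ∫ k, Ksymb μ T k * ‖𝓕 α k‖ ^ 2 := by
    refine integral_mono hintTc hint1 ?_
    intro k
    exact mul_le_mul_of_nonneg_right (Ksymb_mono hTc hTcT k) (by positivity)
  -- the gamma term is nonnegative
  have hγterm_nonneg : 0 ≤ ∫ k, Ksymb μ T k * (γ k - gammaN μ T k) ^ 2 :=
    integral_nonneg fun k => mul_nonneg (Ksymb_pos hT k).le (sq_nonneg _)
  -- Q_{Tc}(α) ≤ C₀ h⁴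
  have hQTc : Qform μ Tc V α ≤ C₀ * h ^ 4 := by
    unfold Qform
    linarith
  have hξ_nonneg : 0 ≤ ∫ x, ‖α x - (∫ y, (starRingEnd ℂ) (αstar y) * α y) • αstar x‖ ^ 2 :=
    integral_nonneg fun x => by positivity
  constructor
  · rw [le_div_iff₀ hκ]
    calc (∫ x, ‖α x - (∫ y, (starRingEnd ℂ) (αstar y) * α y) • αstar x‖ ^ 2) * κ
        = κ * ∫ x, ‖α x - (∫ y, (starRingEnd ℂ) (αstar y) * α y) • αstar x‖ ^ 2 := by ring
      _ ≤ Qform μ Tc V α := hQgap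
      _ ≤ C₀ * h ^ 4 := hQTc
  · -- Q_{Tc}(α) ≥ 0, hence the gamma term is ≤ C₀ h⁴
    have hQ_nonneg : 0 ≤ Qform μ Tc V α :=
      le_trans (mul_nonneg hκ.le hξ_nonneg) hQgap
    have hγbound : (∫ k, Ksymb μ T k * (γ k - gammaN μ T k) ^ 2) ≤ C₀ * h ^ 4 := by
      have : Qform μ Tc V α + (∫ k, Ksymb μ T k * (γ k - gammaN μ T k) ^ 2) ≤ C₀ * h ^ 4 := by
        unfold Qform
        linarith
      linarith
    -- integrability and pointwise comparison for the plain square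
    have hγn_meas : Measurable (gammaN μ T) := by
      unfold gammaN
      exact (Real.measurable_exp.comp (((measurable_norm.pow_const 2).sub_const μ).div_const
        T) |>.const_add 1).inv
    have hsq_meas : Measurable fun k => 2 * T * (γ k - gammaN μ T k) ^ 2 :=
      (((hγ.sub hγn_meas).pow_const 2).const_mul (2 * T))
    have hint4 : Integrable (fun k => 2 * T * (γ k - gammaN μ T k) ^ 2) := by
      refine hint3.mono' hsq_meas.aestronglyMeasurable ?_
      filter_upwards with k
      rw [Real.norm_of_nonneg (by positivity)]
      exact mul_le_mul_of_nonneg_right (two_le_Ksymb hT k) (sq_nonneg _)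
    have hcomp : (∫ k, 2 * T * (γ k - gammaN μ T k) ^ 2)
        ≤ ∫ k, Ksymb μ T k * (γ k - gammaN μ T k) ^ 2 := by
      refine integral_mono hint4 hint3 ?_
      intro k
      exact mul_le_mul_of_nonneg_right (two_le_Ksymb hT k) (sq_nonneg _)
    rw [integral_const_mul] at hcomp
    rw [le_div_iff₀ (by positivity : (0:ℝ) < 2 * T)]
    calc (∫ k, (γ k - gammaN μ T k) ^ 2) * (2 * T)
        = 2 * T * ∫ k, (γ k - gammaN μ T k) ^ 2 := by ring
      _ ≤ ∫ k, Ksymb μ T k * (γ k - gammaN μ T k) ^ 2 := hcomp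
      _ ≤ C₀ * h ^ 4 := hγbound

end
end

section
/- Let e : ℝ → ℝ and Δ : ℝ → ℂ, and let γ : ℝ → ℝ and a : ℝ → ℂ be differentiable functions satisfying, for all t ∈ ℝ, i γ'(t) = Δ(t) conj(a(t)) − conj(Δ(t)) a(t) and i a'(t) = 2 e(t) a(t) + Δ(t)(1 − 2γ(t)). Then the quantity s(t) = √((γ(t) − 1/2)² + |a(t)|²) is constant in t. -/
open Complex

/-- For the component form of the time-dependent Bogoliubov–de-Gennes equation at a fixed
momentum, `i γ' = Δ conj(a) - conj(Δ) a` and `i a' = 2 e a + Δ (1 - 2γ)`, the quantity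
`s(t) = √((γ(t) - 1/2)² + |a(t)|²)` is constant in time. -/
theorem bdg_component_eigenvalue_conserved
    (e : ℝ → ℝ) (Δ : ℝ → ℂ) (γ γ' : ℝ → ℝ) (a a' : ℝ → ℂ)
    (hγ : ∀ t : ℝ, HasDerivAt γ (γ' t) t)
    (ha : ∀ t : ℝ, HasDerivAt a (a' t) t)
    (heq1 : ∀ t : ℝ, Complex.I * (γ' t : ℂ) =
      Δ t * (starRingEnd ℂ) (a t) - (starRingEnd ℂ) (Δ t) * a t)
    (heq2 : ∀ t : ℝ, Complex.I * a' t = 2 * (e t : ℂ) * a t + Δ t * (1 - 2 * (γ t : ℂ))) :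
    ∀ t : ℝ, Real.sqrt ((γ t - 1 / 2) ^ 2 + ‖a t‖ ^ 2) =
      Real.sqrt ((γ 0 - 1 / 2) ^ 2 + ‖a 0‖ ^ 2) := by
  have key : ∀ t : ℝ, HasDerivAt (fun t => (γ t - 1 / 2) ^ 2 + ‖a t‖ ^ 2) 0 t := by
    intro t
    have hre : HasDerivAt (fun t => (a t).re) (a' t).re t :=
      Complex.reCLM.hasFDerivAt.comp_hasDerivAt t (ha t)
    have him : HasDerivAt (fun t => (a t).im) (a' t).im t :=
      Complex.imCLM.hasFDerivAt.comp_hasDerivAt t (ha t)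
    have h1 : HasDerivAt (fun t => (γ t - 1 / 2) ^ 2) (2 * (γ t - 1 / 2) * γ' t) t := by
      have := ((hγ t).sub_const (1 / 2)).fun_pow 2
      simpa [mul_comm, mul_assoc, mul_left_comm] using this
    have h2 : HasDerivAt (fun t => ‖a t‖ ^ 2)
        (2 * (a t).re * (a' t).re + 2 * (a t).im * (a' t).im) t := by
      have h := (hre.fun_pow 2).fun_add (him.fun_pow 2)
      have hfun : (fun t => ‖a t‖ ^ 2) = fun t => (a t).re ^ 2 + (a t).im ^ 2 := by
        funext s
        rw [Complex.sq_norm, Complex.normSq_apply]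
        ring
      rw [hfun]
      refine h.congr_deriv ?_
      ring
    have hsum := h1.add h2
    have e1 := heq1 t
    have e2 := heq2 t
    rw [Complex.ext_iff] at e1 e2
    simp only [Complex.mul_re, Complex.mul_im, Complex.add_re, Complex.add_im,
      Complex.sub_re, Complex.sub_im, Complex.I_re, Complex.I_im, Complex.ofReal_re,
      Complex.ofReal_im, Complex.conj_re, Complex.conj_im, Complex.one_re, Complex.one_im,
      Complex.re_ofNat, Complex.im_ofNat] at e1 e2
    obtain ⟨e1a, e1b⟩ := e1
    obtain ⟨e2a, e2b⟩ := e2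
    have hz : 2 * (γ t - 1 / 2) * γ' t +
        (2 * (a t).re * (a' t).re + 2 * (a t).im * (a' t).im) = 0 := by
      linear_combination (2 * γ t - 1) * e1b - 2 * (a t).im * e2a + 2 * (a t).re * e2b
    rwa [hz] at hsum
  intro t
  have hconst : ∀ s : ℝ, (γ s - 1 / 2) ^ 2 + ‖a s‖ ^ 2 = (γ 0 - 1 / 2) ^ 2 + ‖a 0‖ ^ 2 := by
    intro s
    have := is_const_of_deriv_eq_zero (f := fun t => (γ t - 1 / 2) ^ 2 + ‖a t‖ ^ 2)
      (fun x => (key x).differentiableAt) (fun x => (key x).deriv) s 0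
    simpa using this
  rw [hconst t]
end

section
/- Let H : ℝ → M₂(ℂ), and let Γ : ℝ → M₂(ℂ) be differentiable with i Γ'(t) = H(t) Γ(t) − Γ(t) H(t) for all t ∈ ℝ, such that Γ(t) is Hermitian for every t. If Γ(0) and 1 − Γ(0) are positive semidefinite, then Γ(t) and 1 − Γ(t) are positive semidefinite for all t ∈ ℝ. -/
open scoped ComplexOrder

attribute [local instance] Matrix.normedAddCommGroup Matrix.normedSpace

lemma BdG_aux_trace_eq_pair {A : Matrix (Fin 2) (Fin 2) ℂ} (hA : A.IsHermitian) :
    A.trace = ((hA.eigenvalues 0 : ℝ) : ℂ) + ((hA.eigenvalues 1 : ℝ) : ℂ) := by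
  conv_lhs => rw [hA.spectral_theorem]
  rw [Unitary.conjStarAlgAut_apply]
  rw [Matrix.trace_mul_comm, ← Matrix.mul_assoc]
  have h1 : (star (hA.eigenvectorUnitary : Matrix (Fin 2) (Fin 2) ℂ)) *
      (hA.eigenvectorUnitary : Matrix (Fin 2) (Fin 2) ℂ) = 1 :=
    Matrix.mem_unitaryGroup_iff'.mp hA.eigenvectorUnitary.2
  rw [h1, one_mul]
  simp [Matrix.trace_diagonal, Fin.sum_univ_two]

lemma BdG_aux_det_eq_pair {A : Matrix (Fin 2) (Fin 2) ℂ} (hA : A.IsHermitian) :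
    A.det = ((hA.eigenvalues 0 : ℝ) : ℂ) * ((hA.eigenvalues 1 : ℝ) : ℂ) := by
  rw [hA.det_eq_prod_eigenvalues, Fin.prod_univ_two]; norm_cast

lemma BdG_aux_roots_mem (l0 l1 m0 m1 : ℝ) (hs : l0 + l1 = m0 + m1)
    (hp : l0 * l1 = m0 * m1) :
    (l0 = m0 ∨ l0 = m1) ∧ (l1 = m0 ∨ l1 = m1) := by
  constructor
  · have h : (l0 - m0) * (l0 - m1) = 0 := by linear_combination l0 * hs - hp
    rcases mul_eq_zero.1 h with h | h
    · left; linarith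
    · right; linarith
  · have h : (l1 - m0) * (l1 - m1) = 0 := by linear_combination l1 * hs - hp
    rcases mul_eq_zero.1 h with h | h
    · left; linarith
    · right; linarith

lemma BdG_aux_trace_one_sub (A : Matrix (Fin 2) (Fin 2) ℂ) :
    (1 - A).trace = 2 - A.trace := by
  simp [Matrix.trace_sub]

lemma BdG_aux_det_one_sub (A : Matrix (Fin 2) (Fin 2) ℂ) :
    (1 - A).det = 1 - A.trace + A.det := by
  simp [Matrix.det_fin_two, Matrix.trace_fin_two, Matrix.one_apply, Matrix.sub_apply]
  ring

lemma BdG_aux_eig_range {B : Matrix (Fin 2) (Fin 2) ℂ} (hB : B.IsHermitian)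
    (h1 : B.PosSemidef) (h2 : (1 - B).PosSemidef) :
    ∀ i : Fin 2, 0 ≤ hB.eigenvalues i ∧ hB.eigenvalues i ≤ 1 := by
  have hB1 : (1 - B).IsHermitian := (Matrix.isHermitian_one).sub hB
  set n0 := hB1.eigenvalues 0
  set n1 := hB1.eigenvalues 1
  set m0 := hB.eigenvalues 0
  set m1 := hB.eigenvalues 1
  have hn0 : (0:ℝ) ≤ n0 := h2.eigenvalues_nonneg 0
  have hn1 : (0:ℝ) ≤ n1 := h2.eigenvalues_nonneg 1
  have htr : ((1 - m0 : ℝ) : ℂ) + ((1 - m1 : ℝ) : ℂ) = (n0 : ℂ) + (n1 : ℂ) := by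
    rw [← BdG_aux_trace_eq_pair hB1, BdG_aux_trace_one_sub, BdG_aux_trace_eq_pair hB]
    push_cast; ring
  have hdet : ((1 - m0 : ℝ) : ℂ) * ((1 - m1 : ℝ) : ℂ) = (n0 : ℂ) * (n1 : ℂ) := by
    rw [← BdG_aux_det_eq_pair hB1, BdG_aux_det_one_sub, BdG_aux_trace_eq_pair hB,
      BdG_aux_det_eq_pair hB]
    push_cast; ring
  have hs : (1 - m0) + (1 - m1) = n0 + n1 := by exact_mod_cast htr
  have hp : (1 - m0) * (1 - m1) = n0 * n1 := by exact_mod_cast hdet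
  have hr := BdG_aux_roots_mem (1 - m0) (1 - m1) n0 n1 hs hp
  refine Fin.forall_fin_two.2 ⟨⟨h1.eigenvalues_nonneg 0, ?_⟩, ⟨h1.eigenvalues_nonneg 1, ?_⟩⟩
  · rcases hr.1 with h | h <;> linarith
  · rcases hr.2 with h | h <;> linarith

lemma BdG_aux_posSemidef_pair {A B : Matrix (Fin 2) (Fin 2) ℂ}
    (hA : A.IsHermitian) (hB : B.IsHermitian)
    (htr : A.trace = B.trace) (hdet : A.det = B.det)
    (h1 : B.PosSemidef) (h2 : (1 - B).PosSemidef) :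
    A.PosSemidef ∧ (1 - A).PosSemidef := by
  have hs : hA.eigenvalues 0 + hA.eigenvalues 1 = hB.eigenvalues 0 + hB.eigenvalues 1 := by
    have := (BdG_aux_trace_eq_pair hA).symm.trans (htr.trans (BdG_aux_trace_eq_pair hB))
    exact_mod_cast this
  have hp : hA.eigenvalues 0 * hA.eigenvalues 1 = hB.eigenvalues 0 * hB.eigenvalues 1 := by
    have := (BdG_aux_det_eq_pair hA).symm.trans (hdet.trans (BdG_aux_det_eq_pair hB))
    exact_mod_cast this
  have hr := BdG_aux_roots_mem _ _ _ _ hs hp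
  have hm0 := BdG_aux_eig_range hB h1 h2 0
  have hm1 := BdG_aux_eig_range hB h1 h2 1
  have hl : ∀ i : Fin 2, 0 ≤ hA.eigenvalues i ∧ hA.eigenvalues i ≤ 1 := by
    refine Fin.forall_fin_two.2 ⟨?_, ?_⟩
    · rcases hr.1 with h | h <;> rw [h]
      exacts [hm0, hm1]
    · rcases hr.2 with h | h <;> rw [h]
      exacts [hm0, hm1]
  constructor
  · exact hA.posSemidef_iff_eigenvalues_nonneg.mpr fun i => (hl i).1
  · have hA1 : (1 - A).IsHermitian := (Matrix.isHermitian_one).sub hA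
    apply hA1.posSemidef_iff_eigenvalues_nonneg.mpr
    simp only [Pi.le_def, Pi.zero_apply]
    have htr1 : ((1 - hA.eigenvalues 0 : ℝ) : ℂ) + ((1 - hA.eigenvalues 1 : ℝ) : ℂ)
        = (hA1.eigenvalues 0 : ℂ) + (hA1.eigenvalues 1 : ℂ) := by
      rw [← BdG_aux_trace_eq_pair hA1, BdG_aux_trace_one_sub, BdG_aux_trace_eq_pair hA]
      push_cast; ring
    have hdet1 : ((1 - hA.eigenvalues 0 : ℝ) : ℂ) * ((1 - hA.eigenvalues 1 : ℝ) : ℂ)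
        = (hA1.eigenvalues 0 : ℂ) * (hA1.eigenvalues 1 : ℂ) := by
      rw [← BdG_aux_det_eq_pair hA1, BdG_aux_det_one_sub, BdG_aux_trace_eq_pair hA,
        BdG_aux_det_eq_pair hA]
      push_cast; ring
    have hs1 : hA1.eigenvalues 0 + hA1.eigenvalues 1
        = (1 - hA.eigenvalues 0) + (1 - hA.eigenvalues 1) := by exact_mod_cast htr1.symm
    have hp1 : hA1.eigenvalues 0 * hA1.eigenvalues 1
        = (1 - hA.eigenvalues 0) * (1 - hA.eigenvalues 1) := by exact_mod_cast hdet1.symm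
    have hr1 := BdG_aux_roots_mem _ _ _ _ hs1 hp1
    refine Fin.forall_fin_two.2 ⟨?_, ?_⟩
    · rcases hr1.1 with h | h <;> rw [h] <;> linarith [(hl 0).2, (hl 1).2]
    · rcases hr1.2 with h | h <;> rw [h] <;> linarith [(hl 0).2, (hl 1).2]

lemma BdG_aux_hasDerivAt_entry {Γ : ℝ → Matrix (Fin 2) (Fin 2) ℂ}
    {D : Matrix (Fin 2) (Fin 2) ℂ} {t : ℝ}
    (h : HasDerivAt Γ D t) (i j : Fin 2) :
    HasDerivAt (fun s => Γ s i j) (D i j) t := by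
  let L : Matrix (Fin 2) (Fin 2) ℂ →ₗ[ℂ] ℂ :=
    { toFun := fun M => M i j, map_add' := fun _ _ => rfl, map_smul' := fun _ _ => rfl }
  exact (L.toContinuousLinearMap.restrictScalars ℝ).hasFDerivAt.comp_hasDerivAt t h

/-- If `t ↦ Γ(t)` is a differentiable family of Hermitian `2 × 2` complex matrices satisfying
the Bogoliubov–de-Gennes type equation `i Γ'(t) = H(t) Γ(t) - Γ(t) H(t)`, and if
`0 ≤ Γ(0) ≤ 1`, then `0 ≤ Γ(t) ≤ 1` for all times `t`. -/
theorem posSemidef_conserved_of_BdG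
    (H Γ Γ' : ℝ → Matrix (Fin 2) (Fin 2) ℂ)
    (hderiv : ∀ t : ℝ, HasDerivAt Γ (Γ' t) t)
    (heq : ∀ t : ℝ, Complex.I • Γ' t = H t * Γ t - Γ t * H t)
    (hherm : ∀ t : ℝ, (Γ t).IsHermitian)
    (hpos : (Γ 0).PosSemidef) (hpos' : (1 - Γ 0).PosSemidef) :
    ∀ t : ℝ, (Γ t).PosSemidef ∧ (1 - Γ t).PosSemidef := by
  have hΓ' : ∀ t, Γ' t = (-Complex.I) • (H t * Γ t - Γ t * H t) := by
    intro t
    rw [← heq t, smul_smul]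
    simp [Complex.I_mul_I]
  have htr' : ∀ t, (Γ' t).trace = 0 := by
    intro t
    rw [hΓ' t, Matrix.trace_smul, Matrix.trace_sub, Matrix.trace_mul_comm (H t) (Γ t)]
    simp
  have htrsq : ∀ t, (Γ t * Γ' t).trace = 0 := by
    intro t
    rw [hΓ' t, Matrix.mul_smul, Matrix.trace_smul, Matrix.mul_sub, Matrix.trace_sub,
      Matrix.trace_mul_comm (Γ t) (Γ t * H t), Matrix.mul_assoc]
    simp
  have const : ∀ (f : ℝ → ℂ), (∀ t, HasDerivAt f 0 t) → ∀ t, f t = f 0 := fun f hf t =>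
    is_const_of_deriv_eq_zero (fun x => (hf x).differentiableAt) (fun x => (hf x).deriv) t 0
  have htrace : ∀ t, (Γ t).trace = (Γ 0).trace := by
    apply const
    intro t
    have h := (BdG_aux_hasDerivAt_entry (hderiv t) 0 0).add
      (BdG_aux_hasDerivAt_entry (hderiv t) 1 1)
    have h2 : Γ' t 0 0 + Γ' t 1 1 = 0 := by rw [← Matrix.trace_fin_two]; exact htr' t
    simp only [Matrix.trace_fin_two]; rw [h2] at h; exact h
  have hdet : ∀ t, (Γ t).det = (Γ 0).det := by
    apply const
    intro t
    have h := ((BdG_aux_hasDerivAt_entry (hderiv t) 0 0).mul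
        (BdG_aux_hasDerivAt_entry (hderiv t) 1 1)).sub
      ((BdG_aux_hasDerivAt_entry (hderiv t) 0 1).mul
        (BdG_aux_hasDerivAt_entry (hderiv t) 1 0))
    have hval : Γ' t 0 0 * Γ t 1 1 + Γ t 0 0 * Γ' t 1 1 -
        (Γ' t 0 1 * Γ t 1 0 + Γ t 0 1 * Γ' t 1 0) = 0 := by
      have h1 := htr' t
      have h2 := htrsq t
      rw [Matrix.trace_fin_two] at h1
      rw [Matrix.trace_fin_two, Matrix.mul_apply, Matrix.mul_apply, Fin.sum_univ_two,
        Fin.sum_univ_two] at h2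
      linear_combination (Γ t 0 0 + Γ t 1 1) * h1 - h2
    rw [hval] at h
    simp only [Matrix.det_fin_two]; exact h
  intro t
  exact BdG_aux_posSemidef_pair (hherm t) (hherm 0) (htrace t) (hdet t) hpos hpos'
end

section
/- Let μ > 0 and T > 0. Then there exists C > 0 such that for all δ ∈ (0, √μ], ∫_{Ω_δ} tanh((|k|² − μ)/(2T))² d³k ≤ C δ³. -/
open MeasureTheory

/-- The annulus of thickness `δ` around the Fermi sphere `{|k| = √μ}` in `ℝ³`. -/
def fermiAnnulus (μ δ : ℝ) : Set (EuclideanSpace ℝ (Fin 3)) :=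
  {k | |‖k‖ - Real.sqrt μ| ≤ δ}

lemma aux_sinh_le_mul_cosh {x : ℝ} (hx : 0 ≤ x) : Real.sinh x ≤ x * Real.cosh x := by
  have key : MonotoneOn (fun y : ℝ => y * Real.cosh y - Real.sinh y) (Set.Ici 0) := by
    apply monotoneOn_of_deriv_nonneg (convex_Ici 0)
    · exact ((continuous_id.mul Real.continuous_cosh).sub Real.continuous_sinh).continuousOn
    · intro y _
      exact (((hasDerivAt_id y).mul (Real.hasDerivAt_cosh y)).sub
        (Real.hasDerivAt_sinh y)).differentiableAt.differentiableWithinAt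
    · intro y hy
      rw [interior_Ici] at hy
      have h : HasDerivAt (fun y : ℝ => y * Real.cosh y - Real.sinh y)
          (1 * Real.cosh y + y * Real.sinh y - Real.cosh y) y :=
        ((hasDerivAt_id y).mul (Real.hasDerivAt_cosh y)).sub (Real.hasDerivAt_sinh y)
      rw [h.deriv]
      have h2 := Real.sinh_nonneg_iff.mpr (le_of_lt (Set.mem_Ioi.mp hy))
      have h3 := Set.mem_Ioi.mp hy
      nlinarith
  have h0 := key (Set.self_mem_Ici) (Set.mem_Ici.mpr hx) hx
  simp only [Real.sinh_zero, Real.cosh_zero, mul_one, zero_mul, sub_zero, zero_sub, neg_zero]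
    at h0
  linarith

lemma aux_abs_tanh_le {x : ℝ} : |Real.tanh x| ≤ |x| := by
  rcases le_or_gt 0 x with hx | hx
  · rw [abs_of_nonneg hx]
    have h1 : Real.tanh x ≤ x := by
      rw [Real.tanh_eq_sinh_div_cosh, div_le_iff₀ (Real.cosh_pos _)]
      exact aux_sinh_le_mul_cosh hx
    have h2 : 0 ≤ Real.tanh x := by
      rw [Real.tanh_eq_sinh_div_cosh]
      exact div_nonneg (Real.sinh_nonneg_iff.mpr hx) (Real.cosh_pos _).le
    rw [abs_of_nonneg h2]; exact h1
  · rw [abs_of_neg hx, show Real.tanh x = -Real.tanh (-x) by simp [Real.tanh_neg], abs_neg]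
    have hx' : 0 ≤ -x := by linarith
    have h1 : Real.tanh (-x) ≤ -x := by
      rw [Real.tanh_eq_sinh_div_cosh, div_le_iff₀ (Real.cosh_pos _)]
      exact aux_sinh_le_mul_cosh hx'
    have h2 : 0 ≤ Real.tanh (-x) := by
      rw [Real.tanh_eq_sinh_div_cosh]
      exact div_nonneg (Real.sinh_nonneg_iff.mpr hx') (Real.cosh_pos _).le
    rw [abs_of_nonneg h2]; exact h1

/-- The integral of `tanh((|k|² - μ)/(2T))²` over the annulus `Ω_δ` of thickness `δ` around
the Fermi sphere is bounded by `C δ³`. -/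
theorem tanh_sq_integral_annulus_bound (μ T : ℝ) (hμ : 0 < μ) (hT : 0 < T) :
    ∃ C > 0, ∀ δ : ℝ, δ ∈ Set.Ioc 0 (Real.sqrt μ) →
      (∫ k in fermiAnnulus μ δ, Real.tanh ((‖k‖ ^ 2 - μ) / (2 * T)) ^ 2) ≤ C * δ ^ 3 := by
  set c : ENNReal := ENNReal.ofReal (Real.sqrt Real.pi ^ 3 / Real.Gamma ((3 : ℝ) / 2 + 1))
    with hc
  set C : ℝ := 9 * μ / (4 * T ^ 2) * (8 * μ * c.toReal) + 1 with hC
  have hc0 : 0 ≤ c.toReal := ENNReal.toReal_nonneg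
  have hCpos : 0 < C := by positivity
  refine ⟨C, hCpos, ?_⟩
  rintro δ ⟨hδ0, hδμ⟩
  set sqμ := Real.sqrt μ with hsqμ
  have hsq_pos : 0 < sqμ := Real.sqrt_pos.mpr hμ
  have hμs : sqμ ^ 2 = μ := Real.sq_sqrt hμ.le
  have hδ2 : δ ^ 2 ≤ μ := by nlinarith
  -- volume formulas
  have hvol_cb : volume (Metric.closedBall (0 : EuclideanSpace ℝ (Fin 3)) (sqμ + δ)) =
      ENNReal.ofReal (sqμ + δ) ^ 3 * c := by
    rw [EuclideanSpace.volume_closedBall]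
    norm_num [hc]
  have hvol_b : volume (Metric.ball (0 : EuclideanSpace ℝ (Fin 3)) (sqμ - δ)) =
      ENNReal.ofReal (sqμ - δ) ^ 3 * c := by
    rw [EuclideanSpace.volume_ball]
    norm_num [hc]
  -- the annulus is contained in the spherical shell
  have hsub : fermiAnnulus μ δ ⊆
      Metric.closedBall (0 : EuclideanSpace ℝ (Fin 3)) (sqμ + δ) \
        Metric.ball (0 : EuclideanSpace ℝ (Fin 3)) (sqμ - δ) := by
    intro k hk
    have hk' : |‖k‖ - sqμ| ≤ δ := hk
    rw [abs_le] at hk'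
    constructor
    · rw [Metric.mem_closedBall, dist_zero_right]; linarith [hk'.2]
    · rw [Metric.mem_ball, dist_zero_right, not_lt]; linarith [hk'.1]
  -- volume bound
  have hvol : volume (fermiAnnulus μ δ) ≤ ENNReal.ofReal (8 * μ * δ) * c := by
    have hbsub : Metric.ball (0 : EuclideanSpace ℝ (Fin 3)) (sqμ - δ) ⊆
        Metric.closedBall (0 : EuclideanSpace ℝ (Fin 3)) (sqμ + δ) :=
      (Metric.ball_subset_closedBall).trans (Metric.closedBall_subset_closedBall (by linarith))
    calc volume (fermiAnnulus μ δ) ≤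
        volume (Metric.closedBall (0 : EuclideanSpace ℝ (Fin 3)) (sqμ + δ) \
          Metric.ball (0 : EuclideanSpace ℝ (Fin 3)) (sqμ - δ)) := measure_mono hsub
      _ = volume (Metric.closedBall (0 : EuclideanSpace ℝ (Fin 3)) (sqμ + δ)) -
          volume (Metric.ball (0 : EuclideanSpace ℝ (Fin 3)) (sqμ - δ)) :=
        measure_diff hbsub measurableSet_ball.nullMeasurableSet measure_ball_lt_top.ne
      _ ≤ ENNReal.ofReal (8 * μ * δ) * c := by
        rw [hvol_cb, hvol_b, tsub_le_iff_right, ← add_mul]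
        apply mul_le_mul_left
        rw [← ENNReal.ofReal_pow (by linarith), ← ENNReal.ofReal_pow (by linarith),
          ← ENNReal.ofReal_add (by positivity) (pow_nonneg (by linarith) 3)]
        apply ENNReal.ofReal_le_ofReal
        nlinarith [hμs, hδ2, hδ0.le, hsq_pos.le]
  have hvolfin : volume (fermiAnnulus μ δ) < ⊤ :=
    lt_of_le_of_lt hvol (by exact ENNReal.mul_lt_top ENNReal.ofReal_lt_top ENNReal.ofReal_lt_top)
  -- pointwise bound
  set M : ℝ := 9 * μ * δ ^ 2 / (4 * T ^ 2) with hM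
  have hMpos : 0 < M := by positivity
  have hbound : ∀ k ∈ fermiAnnulus μ δ,
      ‖Real.tanh ((‖k‖ ^ 2 - μ) / (2 * T)) ^ 2‖ ≤ M := by
    intro k hk
    have hk' : |‖k‖ - sqμ| ≤ δ := hk
    have hkn : 0 ≤ ‖k‖ := norm_nonneg k
    have hk2 := abs_le.mp hk'
    have habs : |‖k‖ ^ 2 - μ| ≤ 3 * sqμ * δ := by
      have heq : ‖k‖ ^ 2 - μ = (‖k‖ - sqμ) * (‖k‖ + sqμ) := by rw [← hμs]; ring
      rw [heq, abs_mul]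
      have h2 : |‖k‖ + sqμ| ≤ 3 * sqμ := by
        rw [abs_of_nonneg (by positivity)]; linarith [hk2.2]
      calc |‖k‖ - sqμ| * |‖k‖ + sqμ| ≤ δ * (3 * sqμ) :=
            mul_le_mul hk' h2 (abs_nonneg _) hδ0.le
        _ = 3 * sqμ * δ := by ring
    set y : ℝ := (‖k‖ ^ 2 - μ) / (2 * T) with hy
    have hyabs : |y| ≤ 3 * sqμ * δ / (2 * T) := by
      rw [hy, abs_div, abs_of_pos (by positivity : (0:ℝ) < 2 * T)]
      exact div_le_div_of_nonneg_right habs (by positivity) |>.trans_eq rfl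
    have h1 : Real.tanh y ^ 2 ≤ (3 * sqμ * δ / (2 * T)) ^ 2 := by
      calc Real.tanh y ^ 2 = |Real.tanh y| ^ 2 := (sq_abs _).symm
        _ ≤ |y| ^ 2 := pow_le_pow_left₀ (abs_nonneg _) aux_abs_tanh_le 2
        _ ≤ (3 * sqμ * δ / (2 * T)) ^ 2 := pow_le_pow_left₀ (abs_nonneg _) hyabs 2
    have h2 : (3 * sqμ * δ / (2 * T)) ^ 2 = M := by
      rw [hM, div_pow]
      congr 1
      · nlinarith [hμs]
      · ring
    rw [Real.norm_eq_abs, abs_of_nonneg (sq_nonneg _)]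
    rw [← h2]; exact h1
  -- measurability
  have hcont : Continuous fun k : EuclideanSpace ℝ (Fin 3) =>
      Real.tanh ((‖k‖ ^ 2 - μ) / (2 * T)) ^ 2 := by
    have htanh : Continuous Real.tanh := by
      have : Real.tanh = fun x => Real.sinh x / Real.cosh x := by
        funext x; exact Real.tanh_eq_sinh_div_cosh x
      rw [this]
      exact Real.continuous_sinh.div Real.continuous_cosh fun x => (Real.cosh_pos x).ne'
    exact (htanh.comp (((continuous_norm.pow 2).sub continuous_const).div_const _)).pow 2
  -- integral bound
  have hint : ‖∫ k in fermiAnnulus μ δ, Real.tanh ((‖k‖ ^ 2 - μ) / (2 * T)) ^ 2‖ ≤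
      M * (volume (fermiAnnulus μ δ)).toReal :=
    norm_setIntegral_le_of_norm_le_const hvolfin hbound
  have hvolR : (volume (fermiAnnulus μ δ)).toReal ≤ 8 * μ * δ * c.toReal := by
    have := ENNReal.toReal_mono
      (ENNReal.mul_ne_top ENNReal.ofReal_ne_top ENNReal.ofReal_ne_top) hvol
    rwa [ENNReal.toReal_mul, ENNReal.toReal_ofReal (by positivity)] at this
  calc (∫ k in fermiAnnulus μ δ, Real.tanh ((‖k‖ ^ 2 - μ) / (2 * T)) ^ 2) ≤
      ‖∫ k in fermiAnnulus μ δ, Real.tanh ((‖k‖ ^ 2 - μ) / (2 * T)) ^ 2‖ :=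
        le_abs_self _
    _ ≤ M * (volume (fermiAnnulus μ δ)).toReal := hint
    _ ≤ M * (8 * μ * δ * c.toReal) :=
        mul_le_mul_of_nonneg_left hvolR hMpos.le
    _ = (9 * μ / (4 * T ^ 2) * (8 * μ * c.toReal)) * δ ^ 3 := by rw [hM]; ring
    _ ≤ C * δ ^ 3 := by
        have : (0:ℝ) < δ ^ 3 := by positivity
        nlinarith
end

section
/- For every real x ≠ 0 and all temperatures 0 < T' ≤ T, one has x/tanh(x/(2T)) − x/tanh(x/(2T')) ≤ 2(T − T'). In particular, for T < T_c one has K_T(x) ≥ K_{T_c}(x) − 2(T_c − T) for all x ≠ 0. -/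
open Real Set

private lemma K_aux_hasDerivAt (x : ℝ) {t : ℝ} (ht : 0 < t) (hx : x ≠ 0) :
    HasDerivAt (fun t : ℝ => 2 * t - x * Real.cosh (x / (2 * t)) / Real.sinh (x / (2 * t)))
      (2 - x ^ 2 / (2 * t ^ 2 * Real.sinh (x / (2 * t)) ^ 2)) t := by
  have ht0 : (2 : ℝ) * t ≠ 0 := by positivity
  have hu0 : x / (2 * t) ≠ 0 := div_ne_zero hx ht0
  have hs : Real.sinh (x / (2 * t)) ≠ 0 := Real.sinh_ne_zero.2 hu0
  have h2t : HasDerivAt (fun t : ℝ => 2 * t) 2 t := by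
    simpa using (hasDerivAt_id t).const_mul 2
  have hu : HasDerivAt (fun t : ℝ => x / (2 * t)) (-(x / (2 * t ^ 2))) t := by
    have h := (h2t.inv ht0).const_mul x
    have he : x * (-2 / (2 * t) ^ 2) = -(x / (2 * t ^ 2)) := by
      field_simp
    rw [he] at h
    simpa [div_eq_mul_inv] using h
  have hcosh : HasDerivAt (fun t : ℝ => Real.cosh (x / (2 * t)))
      (Real.sinh (x / (2 * t)) * -(x / (2 * t ^ 2))) t := hu.cosh
  have hnum : HasDerivAt (fun t : ℝ => x * Real.cosh (x / (2 * t)))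
      (x * (Real.sinh (x / (2 * t)) * -(x / (2 * t ^ 2)))) t := hcosh.const_mul x
  have hsinh : HasDerivAt (fun t : ℝ => Real.sinh (x / (2 * t)))
      (Real.cosh (x / (2 * t)) * -(x / (2 * t ^ 2))) t := hu.sinh
  have hdiv := hnum.div hsinh hs
  have hfinal := h2t.sub hdiv
  have hnum2 : x * (Real.sinh (x / (2 * t)) * -(x / (2 * t ^ 2))) * Real.sinh (x / (2 * t)) -
      x * Real.cosh (x / (2 * t)) * (Real.cosh (x / (2 * t)) * -(x / (2 * t ^ 2)))
      = x ^ 2 / (2 * t ^ 2) := by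
    have hc := Real.cosh_sq_sub_sinh_sq (x / (2 * t))
    have ht2 : (2 : ℝ) * t ^ 2 ≠ 0 := by positivity
    field_simp
    linear_combination hc
  rw [hnum2, div_div] at hfinal
  exact hfinal

private lemma K_aux_deriv_nonneg (x : ℝ) {t : ℝ} (ht : 0 < t) (hx : x ≠ 0) :
    0 ≤ 2 - x ^ 2 / (2 * t ^ 2 * Real.sinh (x / (2 * t)) ^ 2) := by
  have ht0 : (2 : ℝ) * t ≠ 0 := by positivity
  set u := x / (2 * t) with hu
  have hu0 : u ≠ 0 := div_ne_zero hx ht0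
  have hs : Real.sinh u ≠ 0 := Real.sinh_ne_zero.2 hu0
  have hle : |u| ≤ |Real.sinh u| := by
    rw [Real.abs_sinh]
    exact Real.self_le_sinh_iff.2 (abs_nonneg u)
  have hsq : u ^ 2 ≤ Real.sinh u ^ 2 := by
    rw [← sq_abs u, ← sq_abs (Real.sinh u)]
    exact pow_le_pow_left₀ (abs_nonneg u) hle 2
  have hx2 : x ^ 2 = 4 * t ^ 2 * u ^ 2 := by
    rw [hu, div_pow, mul_pow, mul_div_assoc', eq_div_iff (by positivity)]
    ring
  rw [sub_nonneg, hx2, div_le_iff₀ (by positivity)]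
  nlinarith [sq_nonneg t, sq_nonneg u]

/-- Lipschitz bound (with constant 2) in the temperature for the symbol
`K_T(x) = x / tanh(x / (2T))`:  for `0 < T' ≤ T` one has `K_T(x) - K_{T'}(x) ≤ 2 (T - T')`. -/
theorem K_symbol_lipschitz_in_temperature
    (x T T' : ℝ) (hx : x ≠ 0) (hT' : 0 < T') (hTT' : T' ≤ T) :
    x / Real.tanh (x / (2 * T)) - x / Real.tanh (x / (2 * T')) ≤ 2 * (T - T') := by
  set g : ℝ → ℝ := fun t => 2 * t - x * Real.cosh (x / (2 * t)) / Real.sinh (x / (2 * t)) with hg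
  have hmono : MonotoneOn g (Ioi (0 : ℝ)) := by
    apply monotoneOn_of_deriv_nonneg (convex_Ioi 0)
    · intro t ht
      exact ((K_aux_hasDerivAt x ht hx).continuousAt).continuousWithinAt
    · intro t ht
      rw [interior_Ioi] at ht
      exact (K_aux_hasDerivAt x ht hx).differentiableAt.differentiableWithinAt
    · intro t ht
      rw [interior_Ioi] at ht
      rw [(K_aux_hasDerivAt x ht hx).deriv]
      exact K_aux_deriv_nonneg x ht hx
  have hT : 0 < T := lt_of_lt_of_le hT' hTT'
  have key := hmono (mem_Ioi.2 hT') (mem_Ioi.2 hT) hTT'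
  have htanh : ∀ t : ℝ, 0 < t →
      x / Real.tanh (x / (2 * t)) = x * Real.cosh (x / (2 * t)) / Real.sinh (x / (2 * t)) := by
    intro t ht
    rw [Real.tanh_eq_sinh_div_cosh, div_div_eq_mul_div]
  rw [htanh T hT, htanh T' hT']
  simp only [hg] at key
  linarith
end

section
/- Let μ > 0 and let f : ℝ³ → ℂ be continuous and bounded with |f(k₀)| > 0 for some k₀ ∈ ℝ³ with |k₀| = √μ. Then there exist c > 0, C > 0 and δ₀ ∈ (0, √μ] such that for all δ ∈ (0, δ₀], all h > 0, M ≥ 1, all ψ, ψ₀ ∈ ℂ with |ψ| ≤ M and |ψ₀| ≤ M, and all ξ, ξ₀ ∈ L²(ℝ³) with ‖ξ‖₂ ≤ M h² and ‖ξ₀‖₂ ≤ M h², one has ∫_{Ω_δ} | |hψ f(k) + ξ(k)|² − |hψ₀ f(k) + ξ₀(k)|² | d³k ≥ c h² δ · | |ψ|² − |ψ₀|² | − C M² (h³ δ^{1/2} + h⁴). -/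
open MeasureTheory

open MeasureTheory Metric Set Pointwise
open scoped ENNReal

local notation "E3" => EuclideanSpace ℝ (Fin 3)

lemma pt_bound (a a₀ b b₀ : ℂ) :
    |‖a‖^2 - ‖a₀‖^2| - (2*‖a‖*‖b‖ + ‖b‖^2) - (2*‖a₀‖*‖b₀‖ + ‖b₀‖^2)
      ≤ |‖a+b‖^2 - ‖a₀+b₀‖^2| := by
  have key : ∀ x y : ℂ, |‖x+y‖^2 - ‖x‖^2| ≤ 2*‖x‖*‖y‖ + ‖y‖^2 := by
    intro x y
    have h1 := norm_add_le x y
    have h2 : |‖x‖ - ‖y‖| ≤ ‖x + y‖ := by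
      have := abs_norm_sub_norm_le x (-y)
      simpa [sub_neg_eq_add] using this
    have h3 : (‖x‖-‖y‖)^2 ≤ ‖x+y‖^2 := by
      nlinarith [abs_nonneg (‖x‖-‖y‖), sq_abs (‖x‖-‖y‖), norm_nonneg (x+y)]
    rw [abs_le]
    constructor <;> nlinarith [norm_nonneg x, norm_nonneg y, norm_nonneg (x+y)]
  have u1 : |‖a‖^2 - ‖a₀‖^2| ≤ |‖a‖^2 - ‖a+b‖^2| + |‖a+b‖^2 - ‖a₀+b₀‖^2|
      + |‖a₀+b₀‖^2 - ‖a₀‖^2| := by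
    have w1 := abs_sub_le (‖a‖^2) (‖a+b‖^2) (‖a₀‖^2)
    have w2 := abs_sub_le (‖a+b‖^2) (‖a₀+b₀‖^2) (‖a₀‖^2)
    linarith
  have e1 : |‖a‖^2 - ‖a+b‖^2| ≤ 2*‖a‖*‖b‖+‖b‖^2 := by
    rw [abs_sub_comm]; exact key a b
  have e2 := key a₀ b₀
  linarith

set_option maxHeartbeats 1600000 in
lemma vol_lower (R ε : ℝ) (hR : 0 < R) (hε : 0 < ε) (k₀ : E3) (hk₀ : ‖k₀‖ = R) :
    ∃ v > 0, ∀ δ ∈ Set.Ioc (0:ℝ) (min (R/2) (ε/4)),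
      ENNReal.ofReal (v * δ) ≤ volume ({k : E3 | |‖k‖ - R| ≤ δ} ∩ closedBall k₀ ε) := by
  set δ₀ : ℝ := min (R/2) (ε/4) with hδ₀def
  have hδ₀pos : 0 < δ₀ := lt_min (by linarith) (by linarith)
  have hδ₀R : δ₀ ≤ R/2 := min_le_left _ _
  have hδ₀ε : δ₀ ≤ ε/4 := min_le_right _ _
  set A : Set E3 := ball k₀ (ε/4) ∩ {k | R - δ₀ < ‖k‖ ∧ ‖k‖ < R} with hAdef
  have hAopen : IsOpen A := by
    apply IsOpen.inter isOpen_ball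
    have : {k : E3 | R - δ₀ < ‖k‖ ∧ ‖k‖ < R} = (fun k : E3 => ‖k‖) ⁻¹' (Set.Ioo (R-δ₀) R) := rfl
    rw [this]
    exact isOpen_Ioo.preimage continuous_norm
  have hAne : A.Nonempty := by
    have hRne : R ≠ 0 := ne_of_gt hR
    have hfrac : δ₀/(2*R) ≤ 1 := by
      rw [div_le_one (by linarith)]; linarith
    have hn : ‖(1 - δ₀/(2*R)) • k₀‖ = R - δ₀/2 := by
      rw [norm_smul, Real.norm_eq_abs, hk₀, abs_of_nonneg (by linarith)]
      field_simp
    refine ⟨(1 - δ₀/(2*R)) • k₀, ?_, ?_, ?_⟩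
    · rw [mem_ball, dist_eq_norm]
      have heq : (1 - δ₀/(2*R)) • k₀ - k₀ = (-(δ₀/(2*R))) • k₀ := by
        rw [sub_smul, one_smul, neg_smul]; abel
      rw [heq, norm_smul, Real.norm_eq_abs, hk₀, abs_neg, abs_of_nonneg (by positivity)]
      have : δ₀/(2*R) * R = δ₀/2 := by field_simp
      rw [this]; linarith
    · rw [hn]; linarith
    · rw [hn]; linarith
  set v₀ : ENNReal := volume A with hv₀def
  have hv₀pos : 0 < v₀ := hAopen.measure_pos volume hAne
  have hv₀fin : v₀ < ⊤ :=
    lt_of_le_of_lt (measure_mono Set.inter_subset_left) measure_ball_lt_top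
  have hv₀t : 0 < v₀.toReal := ENNReal.toReal_pos hv₀pos.ne' hv₀fin.ne
  refine ⟨v₀.toReal / (3*δ₀), by positivity, ?_⟩
  rintro δ ⟨hδpos, hδle⟩
  set N : ℕ := ⌈2*δ₀/δ⌉₊ with hNdef
  have hNge : 2*δ₀/δ ≤ (N:ℝ) := Nat.le_ceil _
  have h2le : (2:ℝ) ≤ 2*δ₀/δ := by rw [le_div_iff₀ hδpos]; linarith
  have hNposR : 0 < (N:ℝ) := by linarith
  have hNne : N ≠ 0 := by exact_mod_cast hNposR.ne'
  have hNd : 2*δ₀ ≤ (N:ℝ)*δ := by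
    have := mul_le_mul_of_nonneg_right hNge hδpos.le
    rwa [div_mul_cancel₀ _ hδpos.ne'] at this
  have hNle : (N:ℝ) ≤ 3*δ₀/δ := by
    rw [le_div_iff₀ hδpos]
    have h2 : (N:ℝ) < 2*δ₀/δ + 1 := Nat.ceil_lt_add_one (by positivity)
    have h3 : (2*δ₀/δ)*δ = 2*δ₀ := div_mul_cancel₀ _ hδpos.ne'
    nlinarith
  set w : ℝ := δ₀ / N with hwdef
  have hwpos : 0 < w := div_pos hδ₀pos hNposR
  have hNw : (N:ℝ) * w = δ₀ := by rw [hwdef, mul_comm, div_mul_cancel₀ _ hNposR.ne']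
  have hwle : w ≤ δ/2 := by
    rw [hwdef, div_le_iff₀ hNposR]; linarith
  set S : ℕ → Set E3 := fun j => A ∩ {k | R - δ₀ + j*w ≤ ‖k‖ ∧ ‖k‖ < R - δ₀ + ((j:ℝ)+1)*w}
    with hSdef
  have hcover : A ⊆ ⋃ j ∈ Finset.range N, S j := by
    intro k hk
    obtain ⟨hkball, hklo, hkhi⟩ := hk
    set x : ℝ := ‖k‖ - (R - δ₀) with hxdef
    have hxpos : 0 < x := by simp only [hxdef]; linarith
    have hxlt : x < δ₀ := by simp only [hxdef]; linarith
    set j : ℕ := ⌊x/w⌋₊ with hjdef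
    have hj1 : (j:ℝ)*w ≤ x := by
      have h := Nat.floor_le (le_of_lt (div_pos hxpos hwpos))
      have := mul_le_mul_of_nonneg_right h hwpos.le
      rwa [div_mul_cancel₀ _ hwpos.ne'] at this
    have hj2 : x < ((j:ℝ)+1)*w := by
      have h := Nat.lt_floor_add_one (x/w)
      exact (div_lt_iff₀ hwpos).mp h
    have hjN : j < N := by
      apply (Nat.floor_lt (by positivity)).mpr
      rw [div_lt_iff₀ hwpos]
      calc x < δ₀ := hxlt
        _ = (N:ℝ)*w := hNw.symm
    refine Set.mem_biUnion (Finset.mem_range.mpr hjN) ⟨⟨hkball, hklo, hkhi⟩, ?_, ?_⟩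
    · show R - δ₀ + (j:ℝ)*w ≤ ‖k‖; simp only [hxdef] at hj1; linarith
    · show ‖k‖ < R - δ₀ + ((j:ℝ)+1)*w; simp only [hxdef] at hj2; linarith
  have hsum : v₀ ≤ ∑ j ∈ Finset.range N, volume (S j) :=
    le_trans (measure_mono hcover) (measure_biUnion_finset_le _ _)
  have hpigeon : ∃ j ∈ Finset.range N, v₀ / N ≤ volume (S j) := by
    obtain ⟨j, hjmem, hjmax⟩ := Finset.exists_max_image (Finset.range N)
      (fun j => volume (S j)) ⟨0, Finset.mem_range.mpr (Nat.pos_of_ne_zero hNne)⟩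
    refine ⟨j, hjmem, ?_⟩
    rw [ENNReal.div_le_iff_le_mul (Or.inl (by exact_mod_cast hNne))
      (Or.inl (ENNReal.natCast_ne_top N))]
    calc v₀ ≤ ∑ i ∈ Finset.range N, volume (S i) := hsum
      _ ≤ ∑ _i ∈ Finset.range N, volume (S j) := Finset.sum_le_sum (fun i hi => hjmax i hi)
      _ = volume (S j) * N := by
          rw [Finset.sum_const, Finset.card_range, nsmul_eq_mul, mul_comm]
  obtain ⟨j, hjmem, hjvol⟩ := hpigeon
  have hjN : j < N := Finset.mem_range.mp hjmem
  set t : ℝ := R - δ₀ + ((j:ℝ)+1)*w with htdef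
  have hjw : ((j:ℝ)+1)*w ≤ δ₀ := by
    have hj1 : (j:ℝ)+1 ≤ (N:ℝ) := by exact_mod_cast Nat.succ_le_of_lt hjN
    calc ((j:ℝ)+1)*w ≤ (N:ℝ)*w := mul_le_mul_of_nonneg_right hj1 hwpos.le
      _ = δ₀ := hNw
  have hjwpos : 0 < ((j:ℝ)+1)*w := by positivity
  have htle : t ≤ R := by simp only [htdef]; linarith
  have htge : R - δ₀ ≤ t := by simp only [htdef]; linarith
  have htpos : 0 < t := by linarith
  set lam : ℝ := R / t with hlamdef
  have hlamt : lam * t = R := div_mul_cancel₀ _ htpos.ne'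
  have hlam1 : 1 ≤ lam := by rw [hlamdef, le_div_iff₀ htpos]; linarith
  have hlam2 : lam ≤ 2 := by rw [hlamdef, div_le_iff₀ htpos]; linarith
  have hsubset : lam • S j ⊆ {k : E3 | |‖k‖ - R| ≤ δ} ∩ closedBall k₀ ε := by
    rintro _ ⟨k, hkS, rfl⟩
    obtain ⟨⟨hkball, hklo, hkhi⟩, hslo, hshi⟩ := hkS
    have hnk : ‖lam • k‖ = lam * ‖k‖ := by
      rw [norm_smul, Real.norm_eq_abs, abs_of_nonneg (by linarith)]
    have hklow : t - w ≤ ‖k‖ := by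
      have : R - δ₀ + (j:ℝ)*w = t - w := by simp only [htdef]; ring
      linarith [hslo, this.symm.le]
    have hkup : ‖k‖ < t := hshi
    constructor
    · show |‖lam • k‖ - R| ≤ δ
      rw [hnk, abs_le]
      have hup : lam * ‖k‖ ≤ R := by
        calc lam * ‖k‖ ≤ lam * t := by
              apply mul_le_mul_of_nonneg_left hkup.le (by linarith)
          _ = R := hlamt
      have hlow : R - δ ≤ lam * ‖k‖ := by
        have h1 : lam * (t - w) ≤ lam * ‖k‖ :=
          mul_le_mul_of_nonneg_left hklow (by linarith)
        have h2 : lam * (t - w) = R - lam * w := by rw [mul_sub, hlamt]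
        have h3 : lam * w ≤ 2 * (δ/2) := by
          apply mul_le_mul hlam2 hwle hwpos.le (by norm_num)
        linarith
      constructor <;> linarith
    · show lam • k ∈ closedBall k₀ ε
      rw [mem_closedBall, dist_eq_norm]
      have hdecomp : lam • k - k₀ = lam • (k - k₀) + (lam - 1) • k₀ := by
        rw [smul_sub, sub_smul, one_smul]; abel
      have hkb : ‖k - k₀‖ < ε/4 := by rwa [mem_ball, dist_eq_norm] at hkball
      have hb1 : ‖lam • (k - k₀)‖ ≤ 2 * (ε/4) := by
        rw [norm_smul, Real.norm_eq_abs, abs_of_nonneg (by linarith)]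
        apply mul_le_mul hlam2 hkb.le (norm_nonneg _) (by norm_num)
      have hb2 : ‖(lam - 1) • k₀‖ ≤ 2*δ₀ := by
        rw [norm_smul, Real.norm_eq_abs, abs_of_nonneg (by linarith : (0:ℝ) ≤ lam - 1), hk₀]
        have hlt : (lam - 1)*t = R - t := by rw [sub_mul, one_mul, hlamt]
        have h5 : (lam-1)*R ≤ (lam-1)*(2*t) :=
          mul_le_mul_of_nonneg_left (by linarith) (by linarith)
        linarith
      calc ‖lam • k - k₀‖ ≤ ‖lam • (k - k₀)‖ + ‖(lam - 1) • k₀‖ := by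
            rw [hdecomp]; exact norm_add_le _ _
        _ ≤ 2*(ε/4) + 2*δ₀ := add_le_add hb1 hb2
        _ ≤ ε := by linarith
  have hvol : volume (lam • S j) = ENNReal.ofReal (lam^3) * volume (S j) := by
    rw [MeasureTheory.Measure.addHaar_smul_of_nonneg volume (by linarith : (0:ℝ) ≤ lam),
      finrank_euclideanSpace_fin]
  have hstep : volume (S j) ≤ volume ({k : E3 | |‖k‖ - R| ≤ δ} ∩ closedBall k₀ ε) := by
    calc volume (S j) = 1 * volume (S j) := (one_mul _).symm
      _ ≤ ENNReal.ofReal (lam^3) * volume (S j) := by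
          apply mul_le_mul_left (ENNReal.one_le_ofReal.mpr (one_le_pow₀ hlam1))
      _ = volume (lam • S j) := hvol.symm
      _ ≤ _ := measure_mono hsubset
  refine le_trans ?_ (le_trans hjvol hstep)
  rw [ENNReal.le_div_iff_mul_le (Or.inl (by exact_mod_cast hNne))
    (Or.inl (ENNReal.natCast_ne_top N))]
  rw [← ENNReal.ofReal_natCast N, ← ENNReal.ofReal_mul (by positivity)]
  apply ENNReal.ofReal_le_of_le_toReal
  have h3 : v₀.toReal / (3*δ₀) * δ * (N:ℝ) ≤ v₀.toReal / (3*δ₀) * δ * (3*δ₀/δ) := by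
    apply mul_le_mul_of_nonneg_left hNle (by positivity)
  have h4 : v₀.toReal / (3*δ₀) * δ * (3*δ₀/δ) = v₀.toReal := by
    field_simp
  linarith

lemma vol_upper (R : ℝ) (hR : 0 < R) :
    ∃ K > 0, ∀ δ ∈ Set.Ioc (0:ℝ) R,
      volume {k : E3 | |‖k‖ - R| ≤ δ} ≤ ENNReal.ofReal (K * δ) := by
  have hVbfin : volume (ball (0:E3) 1) ≠ ⊤ := measure_ball_lt_top.ne
  have hVbpos' : 0 < volume (ball (0:E3) 1) := measure_ball_pos volume 0 one_pos
  set Vb : ℝ := (volume (ball (0:E3) 1)).toReal with hVbdef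
  have hVbpos : 0 < Vb := ENNReal.toReal_pos hVbpos'.ne' hVbfin
  have hV : volume (ball (0:E3) 1) = ENNReal.ofReal Vb := (ENNReal.ofReal_toReal hVbfin).symm
  refine ⟨8*R^2*Vb, by positivity, ?_⟩
  rintro δ ⟨hδpos, hδle⟩
  have hsub : {k : E3 | |‖k‖ - R| ≤ δ} ⊆ closedBall 0 (R+δ) \ ball 0 (R-δ) := by
    intro k hk
    rw [Set.mem_setOf_eq, abs_le] at hk
    constructor
    · rw [mem_closedBall, dist_zero_right]; linarith [hk.2]
    · simp only [mem_ball, dist_zero_right, not_lt]; linarith [hk.1]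
  have hbsub : ball (0:E3) (R-δ) ⊆ closedBall (0:E3) (R+δ) :=
    ball_subset_closedBall.trans (closedBall_subset_closedBall (by linarith))
  calc volume {k : E3 | |‖k‖ - R| ≤ δ}
      ≤ volume (closedBall (0:E3) (R+δ) \ ball 0 (R-δ)) := measure_mono hsub
    _ = volume (closedBall (0:E3) (R+δ)) - volume (ball (0:E3) (R-δ)) :=
        measure_diff hbsub measurableSet_ball.nullMeasurableSet measure_ball_lt_top.ne
    _ = ENNReal.ofReal ((R+δ)^3 * Vb) - ENNReal.ofReal ((R-δ)^3 * Vb) := by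
        rw [MeasureTheory.Measure.addHaar_closedBall volume _ (by linarith : (0:ℝ) ≤ R+δ),
          MeasureTheory.Measure.addHaar_ball volume _ (by linarith : (0:ℝ) ≤ R-δ),
          finrank_euclideanSpace_fin, hV,
          ← ENNReal.ofReal_mul (by positivity),
          ← ENNReal.ofReal_mul (pow_nonneg (by linarith : (0:ℝ) ≤ R-δ) 3)]
    _ = ENNReal.ofReal ((R+δ)^3 * Vb - (R-δ)^3 * Vb) :=
        (ENNReal.ofReal_sub _ (mul_nonneg (pow_nonneg (by linarith : (0:ℝ) ≤ R-δ) 3)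
          hVbpos.le)).symm
    _ ≤ ENNReal.ofReal (8*R^2*Vb * δ) := by
        apply ENNReal.ofReal_le_ofReal
        have hd2 : δ^2 ≤ R^2 := by nlinarith
        nlinarith [hVbpos.le, mul_le_mul_of_nonneg_right hd2 (mul_pos hδpos hVbpos).le]


set_option maxHeartbeats 1600000 in
/-- Lower bound for the integral over the Fermi annulus `Ω_δ` of the difference of the
squared moduli of the pair densities `hψf + ξ` and `hψ₀f + ξ₀`. -/
theorem annulus_integral_pair_density_lower_bound (μ : ℝ) (hμ : 0 < μ)
    (f : EuclideanSpace ℝ (Fin 3) → ℂ) (hf : Continuous f) (B : ℝ) (hB : ∀ k, ‖f k‖ ≤ B)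
    (k₀ : EuclideanSpace ℝ (Fin 3)) (hk₀ : ‖k₀‖ = Real.sqrt μ) (hfk₀ : 0 < ‖f k₀‖) :
    ∃ c > 0, ∃ C > 0, ∃ δ₀ ∈ Set.Ioc (0 : ℝ) (Real.sqrt μ), ∀ δ : ℝ, δ ∈ Set.Ioc 0 δ₀ →
      ∀ h : ℝ, 0 < h → ∀ M : ℝ, 1 ≤ M →
      ∀ ψ ψ₀ : ℂ, ‖ψ‖ ≤ M → ‖ψ₀‖ ≤ M →
      ∀ ξ ξ₀ : EuclideanSpace ℝ (Fin 3) → ℂ,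
      MemLp ξ 2 volume → MemLp ξ₀ 2 volume →
      eLpNorm ξ 2 volume ≤ ENNReal.ofReal (M * h ^ 2) →
      eLpNorm ξ₀ 2 volume ≤ ENNReal.ofReal (M * h ^ 2) →
      c * h ^ 2 * δ * |‖ψ‖ ^ 2 - ‖ψ₀‖ ^ 2| - C * M ^ 2 * (h ^ 3 * δ ^ ((1 : ℝ) / 2) + h ^ 4) ≤
        ∫ k in fermiAnnulus μ δ,
          |‖(h : ℂ) * ψ * f k + ξ k‖ ^ 2 - ‖(h : ℂ) * ψ₀ * f k + ξ₀ k‖ ^ 2| := by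
  set R : ℝ := Real.sqrt μ with hRdef
  have hR : 0 < R := Real.sqrt_pos.mpr hμ
  set r : ℝ := ‖f k₀‖ with hrdef
  have hBpos : 0 < B := lt_of_lt_of_le hfk₀ (hB k₀)
  -- continuity at k₀
  obtain ⟨ε', hε'pos, hε'⟩ : ∃ ε > 0, ∀ k, dist k k₀ < ε → r/2 ≤ ‖f k‖ := by
    have hc : ContinuousAt (fun k => ‖f k‖) k₀ := hf.norm.continuousAt
    obtain ⟨ε, hε, hh⟩ := Metric.continuousAt_iff.mp hc (r/2) (by linarith)
    refine ⟨ε, hε, fun k hk => ?_⟩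
    have := hh hk
    rw [Real.dist_eq, abs_lt] at this
    linarith [this.1]
  set ε : ℝ := ε'/2 with hεdef
  have hεpos : 0 < ε := by positivity
  have hfb : ∀ x ∈ Metric.closedBall k₀ ε, r/2 ≤ ‖f x‖ := fun x hx =>
    hε' x (lt_of_le_of_lt (Metric.mem_closedBall.mp hx) (by rw [hεdef]; linarith))
  obtain ⟨v, hv, hvol⟩ := vol_lower R ε hR hεpos k₀ hk₀
  obtain ⟨K, hK, hupper⟩ := vol_upper R hR
  set δ₀ : ℝ := min (R/2) (ε/4) with hδ₀def
  have hδ₀pos : 0 < δ₀ := lt_min (by linarith) (by linarith)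
  have hδ₀R : δ₀ ≤ R/2 := min_le_left _ _
  set c : ℝ := (r/2)^2 * v with hcdef
  set C : ℝ := 4*B*K^((1:ℝ)/2) + 2 with hCdef
  have hKr : 0 < K^((1:ℝ)/2) := Real.rpow_pos_of_pos hK _
  refine ⟨c, by positivity, C, by positivity, δ₀, ⟨hδ₀pos, by linarith⟩, ?_⟩
  rintro δ ⟨hδpos, hδle⟩ h hh M hM ψ ψ₀ hψ hψ₀ ξ ξ₀ hℒξ hℒξ₀ hnξ hnξ₀
  have hδR : δ ≤ R := by linarith
  set Ω : Set (EuclideanSpace ℝ (Fin 3)) := fermiAnnulus μ δ with hΩdef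
  have hΩeq : Ω = {k : EuclideanSpace ℝ (Fin 3) | |‖k‖ - R| ≤ δ} := rfl
  have hΩmeas : MeasurableSet Ω := by
    rw [hΩeq]
    exact isClosed_le (by continuity) continuous_const |>.measurableSet
  have hΩvol : volume Ω ≤ ENNReal.ofReal (K*δ) := by rw [hΩeq]; exact hupper δ ⟨hδpos, hδR⟩
  have hΩfin : volume Ω < ⊤ := lt_of_le_of_lt hΩvol ENNReal.ofReal_lt_top
  set ν : Measure (EuclideanSpace ℝ (Fin 3)) := volume.restrict Ω with hνdef
  haveI : IsFiniteMeasure ν := by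
    constructor
    rw [hνdef, Measure.restrict_apply_univ]
    exact hΩfin
  set Δ : ℝ := |‖ψ‖^2 - ‖ψ₀‖^2| with hΔdef
  have hΔnn : 0 ≤ Δ := abs_nonneg _
  have hMpos : (0:ℝ) < M := lt_of_lt_of_le one_pos hM
  -- norm computations
  have hna : ∀ k, ‖(h:ℂ)*ψ*f k‖ = h*(‖ψ‖*‖f k‖) := by
    intro k
    rw [norm_mul, norm_mul, Complex.norm_real, Real.norm_eq_abs, abs_of_pos hh, mul_assoc]
  have hna₀ : ∀ k, ‖(h:ℂ)*ψ₀*f k‖ = h*(‖ψ₀‖*‖f k‖) := by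
    intro k
    rw [norm_mul, norm_mul, Complex.norm_real, Real.norm_eq_abs, abs_of_pos hh, mul_assoc]
  have haM : ∀ k, ‖(h:ℂ)*ψ*f k‖ ≤ h*(M*B) := by
    intro k
    rw [hna k]
    exact mul_le_mul_of_nonneg_left
      (mul_le_mul hψ (hB k) (norm_nonneg _) (by linarith)) hh.le
  have haM₀ : ∀ k, ‖(h:ℂ)*ψ₀*f k‖ ≤ h*(M*B) := by
    intro k
    rw [hna₀ k]
    exact mul_le_mul_of_nonneg_left
      (mul_le_mul hψ₀ (hB k) (norm_nonneg _) (by linarith)) hh.le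
  -- pointwise lower bound
  have hpt : ∀ k, h^2*Δ*‖f k‖^2 -
      ((2*(h*(M*B))*‖ξ k‖ + ‖ξ k‖^2) + (2*(h*(M*B))*‖ξ₀ k‖ + ‖ξ₀ k‖^2)) ≤
      |‖(h:ℂ)*ψ*f k + ξ k‖^2 - ‖(h:ℂ)*ψ₀*f k + ξ₀ k‖^2| := by
    intro k
    have hb := pt_bound ((h:ℂ)*ψ*f k) ((h:ℂ)*ψ₀*f k) (ξ k) (ξ₀ k)
    have he : |‖(h:ℂ)*ψ*f k‖^2 - ‖(h:ℂ)*ψ₀*f k‖^2| = h^2*Δ*‖f k‖^2 := by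
      rw [hna k, hna₀ k]
      have h9 : (h*(‖ψ‖*‖f k‖))^2 - (h*(‖ψ₀‖*‖f k‖))^2
          = (h^2*‖f k‖^2)*(‖ψ‖^2-‖ψ₀‖^2) := by ring
      rw [h9, abs_mul, abs_of_nonneg (by positivity : (0:ℝ) ≤ h^2*‖f k‖^2)]
      ring
    have h2 : 2*‖(h:ℂ)*ψ*f k‖*‖ξ k‖ ≤ 2*(h*(M*B))*‖ξ k‖ := by
      have := haM k
      nlinarith [norm_nonneg (ξ k)]
    have h2₀ : 2*‖(h:ℂ)*ψ₀*f k‖*‖ξ₀ k‖ ≤ 2*(h*(M*B))*‖ξ₀ k‖ := by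
      have := haM₀ k
      nlinarith [norm_nonneg (ξ₀ k)]
    rw [he] at hb
    linarith
  -- rpow-to-pow helper
  have hrp : ∀ x : ℝ, 0 ≤ x → x ^ (2:ℝ) = x^2 := fun x hx => by
    rw [show (2:ℝ) = ((2:ℕ):ℝ) by norm_num, Real.rpow_natCast]
  -- integrability
  have hintf2 : Integrable (fun k => ‖f k‖^2) ν := by
    refine Integrable.mono' (integrable_const (B^2))
      ((hf.norm.pow 2).aestronglyMeasurable) (ae_of_all _ fun k => ?_)
    rw [Real.norm_eq_abs, abs_of_nonneg (by positivity)]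
    exact pow_le_pow_left₀ (norm_nonneg _) (hB k) 2
  have hintξ1 : Integrable (fun k => ‖ξ k‖) ν :=
    (memLp_one_iff_integrable.mp
      ((hℒξ.restrict Ω).mono_exponent one_le_two)).norm
  have hintξ1₀ : Integrable (fun k => ‖ξ₀ k‖) ν :=
    (memLp_one_iff_integrable.mp
      ((hℒξ₀.restrict Ω).mono_exponent one_le_two)).norm
  have hgsq : ∀ ζ : EuclideanSpace ℝ (Fin 3) → ℂ, MemLp ζ 2 volume →
      Integrable (fun k => ‖ζ k‖^2) volume := by
    intro ζ hℒ
    have h1 := hℒ.integrable_norm_rpow (by norm_num) (by norm_num)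
    refine h1.congr (ae_of_all _ fun k => ?_)
    show ‖ζ k‖ ^ (2:ℝ≥0∞).toReal = ‖ζ k‖ ^ 2
    rw [ENNReal.toReal_ofNat, hrp _ (norm_nonneg _)]
  have hintξsq : Integrable (fun k => ‖ξ k‖^2) ν := (hgsq ξ hℒξ).restrict
  have hintξ₀sq : Integrable (fun k => ‖ξ₀ k‖^2) ν := (hgsq ξ₀ hℒξ₀).restrict
  have hasmF : AEStronglyMeasurable (fun k => (h:ℂ)*ψ*f k + ξ k) ν :=
    (continuous_const.mul hf).aestronglyMeasurable.add hℒξ.aestronglyMeasurable.restrict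
  have hasmF₀ : AEStronglyMeasurable (fun k => (h:ℂ)*ψ₀*f k + ξ₀ k) ν :=
    (continuous_const.mul hf).aestronglyMeasurable.add hℒξ₀.aestronglyMeasurable.restrict
  have hintF2 : Integrable (fun k => ‖(h:ℂ)*ψ*f k + ξ k‖^2) ν := by
    refine Integrable.mono'
      ((integrable_const (2*(h*(M*B))^2)).add (hintξsq.const_mul 2))
      ((hasmF.norm.mul hasmF.norm).congr (ae_of_all _ fun k => (pow_two _).symm))
      (ae_of_all _ fun k => ?_)
    rw [Real.norm_eq_abs, abs_of_nonneg (by positivity)]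
    simp only [Pi.add_apply]
    have h5 : ‖(h:ℂ)*ψ*f k + ξ k‖ ≤ h*(M*B) + ‖ξ k‖ :=
      le_trans (norm_add_le _ _) (by linarith [haM k])
    have h6 : ‖(h:ℂ)*ψ*f k + ξ k‖^2 ≤ (h*(M*B) + ‖ξ k‖)^2 :=
      pow_le_pow_left₀ (norm_nonneg _) h5 2
    nlinarith [sq_nonneg (h*(M*B) - ‖ξ k‖)]
  have hintF₀2 : Integrable (fun k => ‖(h:ℂ)*ψ₀*f k + ξ₀ k‖^2) ν := by
    refine Integrable.mono'
      ((integrable_const (2*(h*(M*B))^2)).add (hintξ₀sq.const_mul 2))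
      ((hasmF₀.norm.mul hasmF₀.norm).congr (ae_of_all _ fun k => (pow_two _).symm))
      (ae_of_all _ fun k => ?_)
    rw [Real.norm_eq_abs, abs_of_nonneg (by positivity)]
    simp only [Pi.add_apply]
    have h5 : ‖(h:ℂ)*ψ₀*f k + ξ₀ k‖ ≤ h*(M*B) + ‖ξ₀ k‖ :=
      le_trans (norm_add_le _ _) (by linarith [haM₀ k])
    have h6 : ‖(h:ℂ)*ψ₀*f k + ξ₀ k‖^2 ≤ (h*(M*B) + ‖ξ₀ k‖)^2 :=
      pow_le_pow_left₀ (norm_nonneg _) h5 2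
    nlinarith [sq_nonneg (h*(M*B) - ‖ξ₀ k‖)]
  have hG : Integrable
      (fun k => |‖(h:ℂ)*ψ*f k + ξ k‖^2 - ‖(h:ℂ)*ψ₀*f k + ξ₀ k‖^2|) ν :=
    (hintF2.sub hintF₀2).abs
  have hE1 : Integrable (fun k => 2*(h*(M*B))*‖ξ k‖ + ‖ξ k‖^2) ν :=
    (hintξ1.const_mul _).add hintξsq
  have hE2 : Integrable (fun k => 2*(h*(M*B))*‖ξ₀ k‖ + ‖ξ₀ k‖^2) ν :=
    (hintξ1₀.const_mul _).add hintξ₀sq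
  have hE : Integrable (fun k =>
      (2*(h*(M*B))*‖ξ k‖ + ‖ξ k‖^2) + (2*(h*(M*B))*‖ξ₀ k‖ + ‖ξ₀ k‖^2)) ν :=
    hE1.add hE2
  have hL : Integrable (fun k => h^2*Δ*‖f k‖^2 -
      ((2*(h*(M*B))*‖ξ k‖ + ‖ξ k‖^2) + (2*(h*(M*B))*‖ξ₀ k‖ + ‖ξ₀ k‖^2))) ν :=
    (hintf2.const_mul _).sub hE
  have hmono : (∫ k, (h^2*Δ*‖f k‖^2 -
      ((2*(h*(M*B))*‖ξ k‖ + ‖ξ k‖^2) + (2*(h*(M*B))*‖ξ₀ k‖ + ‖ξ₀ k‖^2))) ∂ν) ≤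
      ∫ k, |‖(h:ℂ)*ψ*f k + ξ k‖^2 - ‖(h:ℂ)*ψ₀*f k + ξ₀ k‖^2| ∂ν :=
    integral_mono hL hG hpt
  have hIL : (∫ k, (h^2*Δ*‖f k‖^2 -
      ((2*(h*(M*B))*‖ξ k‖ + ‖ξ k‖^2) + (2*(h*(M*B))*‖ξ₀ k‖ + ‖ξ₀ k‖^2))) ∂ν) =
      h^2*Δ*(∫ k, ‖f k‖^2 ∂ν) -
      ((2*(h*(M*B))*(∫ k, ‖ξ k‖ ∂ν) + ∫ k, ‖ξ k‖^2 ∂ν)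
        + (2*(h*(M*B))*(∫ k, ‖ξ₀ k‖ ∂ν) + ∫ k, ‖ξ₀ k‖^2 ∂ν)) := by
    have hcm1 : Integrable (fun k => 2*(h*(M*B))*‖ξ k‖) ν := hintξ1.const_mul _
    have hcm2 : Integrable (fun k => 2*(h*(M*B))*‖ξ₀ k‖) ν := hintξ1₀.const_mul _
    have hfm : Integrable (fun k => h^2*Δ*‖f k‖^2) ν := hintf2.const_mul _
    rw [integral_sub hfm hE, integral_add hE1 hE2, integral_add hcm1 hintξsq,
      integral_add hcm2 hintξ₀sq, integral_const_mul _ _, integral_const_mul _ _, integral_const_mul _ _]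
  -- main term lower bound
  have hIf : (r/2)^2*(v*δ) ≤ ∫ k, ‖f k‖^2 ∂ν := by
    have hsub : Ω ∩ Metric.closedBall k₀ ε ⊆ Ω := Set.inter_subset_left
    have hcap : MeasurableSet (Ω ∩ Metric.closedBall k₀ ε) :=
      hΩmeas.inter measurableSet_closedBall
    have hvolcap : ENNReal.ofReal (v*δ) ≤ volume (Ω ∩ Metric.closedBall k₀ ε) :=
      hvol δ ⟨hδpos, hδle⟩
    have hfincap : volume (Ω ∩ Metric.closedBall k₀ ε) ≠ ⊤ :=
      (lt_of_le_of_lt (measure_mono hsub) hΩfin).ne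
    have h1 : (r/2)^2 * (volume (Ω ∩ Metric.closedBall k₀ ε)).toReal
        ≤ ∫ k in Ω ∩ Metric.closedBall k₀ ε, ‖f k‖^2 := by
      apply setIntegral_ge_of_const_le_real hcap hfincap
      · intro x hx
        exact pow_le_pow_left₀ (by linarith) (hfb x hx.2) 2
      · exact (show IntegrableOn (fun k => ‖f k‖^2) Ω volume from hintf2).mono_set hsub
    have h2 : (∫ k in Ω ∩ Metric.closedBall k₀ ε, ‖f k‖^2) ≤ ∫ k in Ω, ‖f k‖^2 :=
      setIntegral_mono_set hintf2 (ae_of_all _ fun k => by positivity)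
        (HasSubset.Subset.eventuallyLE hsub)
    have h3 : v*δ ≤ (volume (Ω ∩ Metric.closedBall k₀ ε)).toReal :=
      (ENNReal.ofReal_le_iff_le_toReal hfincap).mp hvolcap
    have h4 : (r/2)^2*(v*δ) ≤ (r/2)^2 * (volume (Ω ∩ Metric.closedBall k₀ ε)).toReal :=
      mul_le_mul_of_nonneg_left h3 (by positivity)
    calc (r/2)^2*(v*δ) ≤ _ := h4
      _ ≤ ∫ k in Ω ∩ Metric.closedBall k₀ ε, ‖f k‖^2 := h1
      _ ≤ ∫ k, ‖f k‖^2 ∂ν := h2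
  -- L¹ error bound
  have hIξgen : ∀ ζ : EuclideanSpace ℝ (Fin 3) → ℂ, MemLp ζ 2 volume →
      eLpNorm ζ 2 volume ≤ ENNReal.ofReal (M * h ^ 2) →
      (∫ k, ‖ζ k‖ ∂ν) ≤ M*h^2*(K^((1:ℝ)/2)*δ^((1:ℝ)/2)) := by
    intro ζ hℒ hn
    have hasm : AEStronglyMeasurable ζ ν := hℒ.aestronglyMeasurable.restrict
    have e1 := eLpNorm_le_eLpNorm_mul_rpow_measure_univ (p := 1) (q := 2) one_le_two hasm
    have e2 : eLpNorm ζ 2 ν ≤ ENNReal.ofReal (M*h^2) :=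
      le_trans (eLpNorm_mono_measure ζ Measure.restrict_le_self) hn
    have e3 : ν Set.univ ≤ ENNReal.ofReal (K*δ) := by
      rw [hνdef, Measure.restrict_apply_univ]; exact hΩvol
    have hexp : (1 / (1:ENNReal).toReal - 1/(2:ENNReal).toReal) = (1:ℝ)/2 := by
      rw [ENNReal.toReal_one, ENNReal.toReal_ofNat]; norm_num
    have e4 : eLpNorm ζ 1 ν ≤ ENNReal.ofReal (M*h^2) * ENNReal.ofReal (K*δ) ^ ((1:ℝ)/2) := by
      refine le_trans e1 ?_
      rw [hexp]
      exact mul_le_mul' e2 (ENNReal.rpow_le_rpow e3 (by norm_num))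
    have e5 : ENNReal.ofReal (M*h^2) * ENNReal.ofReal (K*δ) ^ ((1:ℝ)/2)
        = ENNReal.ofReal (M*h^2*((K*δ)^((1:ℝ)/2))) := by
      rw [ENNReal.ofReal_rpow_of_nonneg (by positivity : (0:ℝ) ≤ K*δ) (by norm_num : (0:ℝ) ≤ (1:ℝ)/2),
        ← ENNReal.ofReal_mul (by positivity)]
    have e6 : (∫ k, ‖ζ k‖ ∂ν) = (eLpNorm ζ 1 ν).toReal := by
      rw [eLpNorm_one_eq_lintegral_enorm, integral_norm_eq_lintegral_enorm hasm]
    rw [e6]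
    calc (eLpNorm ζ 1 ν).toReal
        ≤ (ENNReal.ofReal (M*h^2*((K*δ)^((1:ℝ)/2)))).toReal :=
          ENNReal.toReal_mono ENNReal.ofReal_ne_top (e4.trans_eq e5)
      _ = M*h^2*((K*δ)^((1:ℝ)/2)) := ENNReal.toReal_ofReal (by positivity)
      _ = M*h^2*(K^((1:ℝ)/2)*δ^((1:ℝ)/2)) := by rw [Real.mul_rpow hK.le hδpos.le]
  -- L² error bound
  have hIsqgen : ∀ ζ : EuclideanSpace ℝ (Fin 3) → ℂ, MemLp ζ 2 volume →
      eLpNorm ζ 2 volume ≤ ENNReal.ofReal (M * h ^ 2) →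
      (∫ k, ‖ζ k‖^2 ∂ν) ≤ (M*h^2)^2 := by
    intro ζ hℒ hn
    have hg : Integrable (fun k => ‖ζ k‖^2) volume := hgsq ζ hℒ
    have h1 : (∫ k, ‖ζ k‖^2 ∂ν) ≤ ∫ k, ‖ζ k‖^2 :=
      setIntegral_le_integral hg (ae_of_all _ fun k => by positivity)
    have h2 := hℒ.eLpNorm_eq_integral_rpow_norm (by norm_num) (by norm_num)
    rw [h2] at hn
    have hIeq : (∫ k, ‖ζ k‖ ^ (2:ENNReal).toReal) = ∫ k, ‖ζ k‖^2 := by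
      apply integral_congr_ae (ae_of_all _ fun k => ?_)
      rw [ENNReal.toReal_ofNat, hrp _ (norm_nonneg _)]
    set I : ℝ := ∫ k, ‖ζ k‖^2 with hIdef
    have hI0 : 0 ≤ I := integral_nonneg fun k => by positivity
    rw [hIeq] at hn
    have h3 : I ^ ((2:ENNReal).toReal)⁻¹ ≤ M*h^2 :=
      (ENNReal.ofReal_le_ofReal_iff (by positivity)).mp hn
    rw [ENNReal.toReal_ofNat] at h3
    have h4 : (I ^ ((2:ℝ))⁻¹)^2 = I := by
      rw [← Real.rpow_natCast (I ^ ((2:ℝ))⁻¹) 2, ← Real.rpow_mul hI0]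
      norm_num
    have h5 : (I ^ ((2:ℝ))⁻¹)^2 ≤ (M*h^2)^2 :=
      pow_le_pow_left₀ (Real.rpow_nonneg hI0 _) h3 2
    rw [h4] at h5
    exact le_trans h1 h5
  have hIξ := hIξgen ξ hℒξ hnξ
  have hIξ₀ := hIξgen ξ₀ hℒξ₀ hnξ₀
  have hIsq := hIsqgen ξ hℒξ hnξ
  have hIsq₀ := hIsqgen ξ₀ hℒξ₀ hnξ₀
  -- final assembly
  rw [hIL] at hmono
  have hmain : c * h^2 * δ * Δ ≤ h^2*Δ*(∫ k, ‖f k‖^2 ∂ν) := by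
    have := mul_le_mul_of_nonneg_left hIf (by positivity : (0:ℝ) ≤ h^2*Δ)
    calc c * h^2 * δ * Δ = h^2*Δ*((r/2)^2*(v*δ)) := by rw [hcdef]; ring
      _ ≤ h^2*Δ*(∫ k, ‖f k‖^2 ∂ν) := this
  have herr : (2*(h*(M*B))*(∫ k, ‖ξ k‖ ∂ν) + ∫ k, ‖ξ k‖^2 ∂ν)
        + (2*(h*(M*B))*(∫ k, ‖ξ₀ k‖ ∂ν) + ∫ k, ‖ξ₀ k‖^2 ∂ν)
      ≤ C * M^2 * (h^3*δ^((1:ℝ)/2) + h^4) := by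
    have hd : (0:ℝ) ≤ δ^((1:ℝ)/2) := Real.rpow_nonneg hδpos.le _
    have hc1 : 2*(h*(M*B))*(∫ k, ‖ξ k‖ ∂ν) ≤ 2*(h*(M*B))*(M*h^2*(K^((1:ℝ)/2)*δ^((1:ℝ)/2))) :=
      mul_le_mul_of_nonneg_left hIξ (by positivity)
    have hc2 : 2*(h*(M*B))*(∫ k, ‖ξ₀ k‖ ∂ν) ≤ 2*(h*(M*B))*(M*h^2*(K^((1:ℝ)/2)*δ^((1:ℝ)/2))) :=
      mul_le_mul_of_nonneg_left hIξ₀ (by positivity)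
    have hexpand : 2*(2*(h*(M*B))*(M*h^2*(K^((1:ℝ)/2)*δ^((1:ℝ)/2)))) + 2*(M*h^2)^2
        ≤ C * M^2 * (h^3*δ^((1:ℝ)/2) + h^4) := by
      rw [hCdef]
      have hpos1 : (0:ℝ) ≤ 2*M^2*h^3*δ^((1:ℝ)/2) := by positivity
      have hpos2 : (0:ℝ) ≤ 4*B*K^((1:ℝ)/2)*M^2*h^4 := by positivity
      nlinarith [hpos1, hpos2]
    linarith [hIsq, hIsq₀, hc1, hc2]
  linarith [hmono, hmain, herr]
end
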